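/- (Generalised Policy Improvement) Let π_1,…,π_n be policies with action-value functions Q^{π_1},…,Q^{π_n} on a common MDP, and define the GPI policy π(s) ∈ argmax_a max_i Q^{π_i}(s,a). Then Q^π(s,a) ≥ max_i Q^{π_i}(s,a) for all (s,a) ∈ S×A. -/

import Mathlib

open scoped RealInnerProductSpace

noncomputable section

variable {S A E : Type*}

/-- Expected value at step `n` of the (vector-valued) one-step function `f` along
trajectories that start with the state-action pair `(s, a)` and afterwards follow the
deterministic policy `π` in an MDP with transition kernel `p`. -/
def stepVal [Fintype S] [AddCommMonoid E] [Module ℝ E]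
    (p : S → A → S → ℝ) (π : S → A) (f : S → A → S → E) : ℕ → S → A → E
  | 0, s, a => ∑ s' : S, p s a s' • f s a s'
  | n + 1, s, a => ∑ s' : S, p s a s' • stepVal p π f n s' (π s')

/-- Expected discounted sum of the one-step quantities `f` when following policy `π`
after starting with the pair `(s, a)`. -/
def polVal [Fintype S] [NormedAddCommGroup E] [NormedSpace ℝ E]
    (p : S → A → S → ℝ) (γ : ℝ) (π : S → A) (f : S → A → S → E) (s : S) (a : A) : E :=
  ∑' n : ℕ, γ ^ n • stepVal p π f n s a

/-- Action-value function `Q^π` of policy `π` for the one-step reward `r`. -/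
def Qpol [Fintype S] (p : S → A → S → ℝ) (γ : ℝ) (π : S → A)
    (r : S → A → S → ℝ) (s : S) (a : A) : ℝ :=
  polVal p γ π r s a

/-- Successor features of policy `π`: the expected discounted sum of feature vectors. -/
def SF [Fintype S] {d : ℕ} (p : S → A → S → ℝ) (γ : ℝ) (π : S → A)
    (φ : S → A → S → EuclideanSpace ℝ (Fin d)) (s : S) (a : A) :
    EuclideanSpace ℝ (Fin d) :=
  polVal p γ π φ s a

/-- `p` is a probability transition kernel. -/
def IsKernel [Fintype S] (p : S → A → S → ℝ) : Prop :=
  (∀ s a s', 0 ≤ p s a s') ∧ ∀ s a, ∑ s' : S, p s a s' = 1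

/-- Optimal action-value function, over deterministic stationary policies. -/
def Qstar [Fintype S] (p : S → A → S → ℝ) (γ : ℝ) (r : S → A → S → ℝ)
    (s : S) (a : A) : ℝ :=
  ⨆ π : S → A, Qpol p γ π r s a

/-- Reward linear in the features `φ` with task (weight) vector `w`. -/
def rTask {d : ℕ} (φ : S → A → S → EuclideanSpace ℝ (Fin d))
    (w : EuclideanSpace ℝ (Fin d)) : S → A → S → ℝ :=
  fun s a s' => ⟪φ s a s', w⟫

end

section helpers

variable {S A : Type*} [Fintype S] [Fintype A]

set_option linter.unusedSectionVars false

theorem stepVal_bound (p : S → A → S → ℝ) (hp : IsKernel p)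
    (r : S → A → S → ℝ) (π : S → A)
    (R : ℝ) (hR : ∀ s a s', |r s a s'| ≤ R) :
    ∀ n s a, |stepVal p π r n s a| ≤ R := by
  intro n
  induction n with
  | zero =>
    intro s a
    simp only [stepVal, smul_eq_mul]
    calc |∑ s', p s a s' * r s a s'| ≤ ∑ s', |p s a s' * r s a s'| :=
          Finset.abs_sum_le_sum_abs _ _
      _ ≤ ∑ s', p s a s' * R := by
          apply Finset.sum_le_sum; intro s' _
          rw [abs_mul, abs_of_nonneg (hp.1 s a s')]
          exact mul_le_mul_of_nonneg_left (hR s a s') (hp.1 s a s')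
      _ = R := by rw [← Finset.sum_mul, hp.2 s a, one_mul]
  | succ m ih =>
    intro s a
    simp only [stepVal, smul_eq_mul]
    calc |∑ s', p s a s' * stepVal p π r m s' (π s')|
        ≤ ∑ s', |p s a s' * stepVal p π r m s' (π s')| := Finset.abs_sum_le_sum_abs _ _
      _ ≤ ∑ s', p s a s' * R := by
          apply Finset.sum_le_sum; intro s' _
          rw [abs_mul, abs_of_nonneg (hp.1 s a s')]
          exact mul_le_mul_of_nonneg_left (ih s' (π s')) (hp.1 s a s')
      _ = R := by rw [← Finset.sum_mul, hp.2 s a, one_mul]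

theorem summable_stepVal (p : S → A → S → ℝ) (hp : IsKernel p)
    (γ : ℝ) (hγ0 : 0 ≤ γ) (hγ1 : γ < 1)
    (r : S → A → S → ℝ) (π : S → A)
    (R : ℝ) (hR : ∀ s a s', |r s a s'| ≤ R) (s : S) (a : A) :
    Summable (fun n : ℕ => γ ^ n * stepVal p π r n s a) := by
  apply Summable.of_norm_bounded (g := fun n : ℕ => R * γ ^ n)
    ((summable_geometric_of_lt_one hγ0 hγ1).mul_left R)
  intro n
  rw [Real.norm_eq_abs, abs_mul, abs_pow, abs_of_nonneg hγ0, mul_comm]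
  exact mul_le_mul_of_nonneg_right (stepVal_bound p hp r π R hR n s a)
    (pow_nonneg hγ0 n)

theorem Qpol_bellman (p : S → A → S → ℝ) (hp : IsKernel p)
    (γ : ℝ) (hγ0 : 0 ≤ γ) (hγ1 : γ < 1)
    (r : S → A → S → ℝ) (π : S → A)
    (R : ℝ) (hR : ∀ s a s', |r s a s'| ≤ R) (s : S) (a : A) :
    Qpol p γ π r s a =
      (∑ s' : S, p s a s' * r s a s') +
        γ * ∑ s' : S, p s a s' * Qpol p γ π r s' (π s') := by
  have hsum : ∀ s a, Summable (fun n : ℕ => γ ^ n * stepVal p π r n s a) :=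
    summable_stepVal p hp γ hγ0 hγ1 r π R hR
  simp only [Qpol, polVal, smul_eq_mul]
  rw [Summable.tsum_eq_zero_add (hsum s a)]
  have h0 : γ ^ 0 * stepVal p π r 0 s a = ∑ s' : S, p s a s' * r s a s' := by
    simp [stepVal, smul_eq_mul]
  rw [h0]
  congr 1
  have hterm : ∀ n : ℕ, γ ^ (n + 1) * stepVal p π r (n + 1) s a
      = ∑ s' : S, (γ * p s a s') * (γ ^ n * stepVal p π r n s' (π s')) := by
    intro n
    simp only [stepVal, smul_eq_mul, Finset.mul_sum]
    apply Finset.sum_congr rfl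
    intro s' _
    ring
  calc ∑' n : ℕ, γ ^ (n + 1) * stepVal p π r (n + 1) s a
      = ∑' n : ℕ, ∑ s' : S, (γ * p s a s') * (γ ^ n * stepVal p π r n s' (π s')) := by
        exact tsum_congr hterm
    _ = ∑ s' : S, ∑' n : ℕ, (γ * p s a s') * (γ ^ n * stepVal p π r n s' (π s')) := by
        exact Summable.tsum_finsetSum (fun s' _ => (hsum s' (π s')).mul_left _)
    _ = γ * ∑ s' : S, p s a s' * Qpol p γ π r s' (π s') := by
        rw [Finset.mul_sum]
        apply Finset.sum_congr rfl
        intro s' _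
        rw [tsum_mul_left]
        simp only [Qpol, polVal, smul_eq_mul]
        ring

end helpers

/-- Generalised Policy Improvement: if `π(s)` is a greedy action for
`max_i Q^{π_i}(s,·)` at every state, then `Q^π ≥ max_i Q^{π_i}` everywhere. -/
theorem statement2 {S A : Type*} [Fintype S] [Fintype A] [Nonempty S] [Nonempty A]
    (p : S → A → S → ℝ) (hp : IsKernel p)
    (γ : ℝ) (hγ0 : 0 ≤ γ) (hγ1 : γ < 1)
    (r : S → A → S → ℝ) (n : ℕ) (hn : 0 < n) (πs : Fin n → S → A) (π : S → A)
    (hGPI : ∀ s a, (⨆ i, Qpol p γ (πs i) r s a) ≤ ⨆ i, Qpol p γ (πs i) r s (π s)) :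
    ∀ s a i, Qpol p γ (πs i) r s a ≤ Qpol p γ π r s a := by
  haveI : NeZero n := ⟨hn.ne'⟩
  -- bound on rewards
  obtain ⟨⟨s0, a0, s0'⟩, hmax⟩ :=
    Finite.exists_max (fun x : S × A × S => |r x.1 x.2.1 x.2.2|)
  set R : ℝ := |r s0 a0 s0'| with hRdef
  have hR : ∀ s a s', |r s a s'| ≤ R := fun s a s' => hmax (s, a, s')
  -- the gap function and its maximizer
  set f : S × A × Fin n → ℝ :=
    fun x => Qpol p γ (πs x.2.2) r x.1 x.2.1 - Qpol p γ π r x.1 x.2.1 with hf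
  obtain ⟨⟨sm, am, im⟩, hΔ⟩ := Finite.exists_max f
  set Δ : ℝ := f (sm, am, im) with hΔdef
  have hΔle : ∀ s a i, Qpol p γ (πs i) r s a - Qpol p γ π r s a ≤ Δ :=
    fun s a i => hΔ (s, a, i)
  -- key contraction inequality
  have hcontr : Δ ≤ γ * Δ := by
    have hb1 := Qpol_bellman p hp γ hγ0 hγ1 r (πs im) R hR sm am
    have hb2 := Qpol_bellman p hp γ hγ0 hγ1 r π R hR sm am
    have hterm : ∀ s' : S,
        Qpol p γ (πs im) r s' (πs im s') - Qpol p γ π r s' (π s') ≤ Δ := by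
      intro s'
      have h1 : Qpol p γ (πs im) r s' (πs im s') ≤ ⨆ j, Qpol p γ (πs j) r s' (πs im s') :=
        le_ciSup (f := fun j => Qpol p γ (πs j) r s' (πs im s'))
          (Finite.bddAbove_range _) im
      have h2 : (⨆ j, Qpol p γ (πs j) r s' (πs im s')) ≤
          ⨆ j, Qpol p γ (πs j) r s' (π s') := hGPI s' (πs im s')
      have h3 : (⨆ j, Qpol p γ (πs j) r s' (π s')) ≤ Qpol p γ π r s' (π s') + Δ := by
        apply ciSup_le
        intro j
        have := hΔle s' (π s') j
        linarith
      linarith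
    have hsum : ∑ s' : S, p sm am s' * Qpol p γ (πs im) r s' (πs im s')
        ≤ ∑ s' : S, p sm am s' * (Qpol p γ π r s' (π s') + Δ) := by
      apply Finset.sum_le_sum
      intro s' _
      apply mul_le_mul_of_nonneg_left _ (hp.1 sm am s')
      have := hterm s'
      linarith
    have hsum2 : ∑ s' : S, p sm am s' * (Qpol p γ π r s' (π s') + Δ)
        = (∑ s' : S, p sm am s' * Qpol p γ π r s' (π s')) + Δ := by
      simp only [mul_add, Finset.sum_add_distrib, ← Finset.sum_mul, hp.2 sm am, one_mul]
    have : Δ = γ * ((∑ s' : S, p sm am s' * Qpol p γ (πs im) r s' (πs im s'))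
        - ∑ s' : S, p sm am s' * Qpol p γ π r s' (π s')) := by
      rw [hΔdef, hf]
      simp only
      rw [hb1, hb2]
      ring
    have hle : (∑ s' : S, p sm am s' * Qpol p γ (πs im) r s' (πs im s'))
        - ∑ s' : S, p sm am s' * Qpol p γ π r s' (π s') ≤ Δ := by
      rw [hsum2] at hsum
      linarith
    calc Δ = γ * _ := this
      _ ≤ γ * Δ := mul_le_mul_of_nonneg_left hle hγ0
  have hΔ0 : Δ ≤ 0 := by nlinarith
  intro s a i
  have := hΔle s a i
  linarith
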